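/- Let X be a Hausdorff space, let p : I → X be a regular path, and let φ : I → I be a reparametrization. If p ∘ φ = p, then φ = id_I or p is constant. In particular, for x ≠ y in X, the right action of the group Homeo₊(I) of increasing self-homeomorphisms of I on the set of regular paths from x to y is free. -/

import Mathlib

open unitInterval

/-- `φ` is a reparametrization of the unit interval: a continuous weakly
increasing self-map of `I` with `φ 0 = 0` and `φ 1 = 1` (such a map is
automatically surjective). -/
def IsRepar (φ : I → I) : Prop :=
  Continuous φ ∧ Monotone φ ∧ φ 0 = 0 ∧ φ 1 = 1

/-- `p` is constant on the closed subinterval `[a, b]` of `I`. -/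
def ConstOn {X : Type*} (p : I → X) (a b : I) : Prop :=
  ∀ s ∈ Set.Icc a b, ∀ t ∈ Set.Icc a b, p s = p t


/-- A path `p : I → X` is regular if it is constant on no nondegenerate
closed subinterval of `I`, unless it is constant on all of `I`. -/
def IsRegularPath {X : Type*} (p : I → X) : Prop :=
  (∀ s t : I, p s = p t) ∨ ∀ a b : I, a < b → ¬ ConstOn p a b

open Filter Topology in
lemma key_aux {X : Type*} [TopologicalSpace X] [T2Space X]
    (p : I → X) (hp : Continuous p) (φ : I → I) (hφc : Continuous φ)
    (hφm : Monotone φ) (hfix : ∀ s, p (φ s) = p s) (t : I) (ht : t < φ t) :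
    ∃ a b : I, a < b ∧ ConstOn p a b := by
  set u : ℕ → I := fun n => φ^[n] t with hu
  have hustep : ∀ n, u (n+1) = φ (u n) := by
    intro n; simp [hu, Function.iterate_succ_apply']
  have humono : Monotone u := by
    have h1 : ∀ n, u n ≤ u (n+1) := by
      intro n
      induction n with
      | zero => simpa [hu] using ht.le
      | succ k ih => rw [hustep, hustep]; exact hφm ih
    exact monotone_nat_of_le_succ h1
  have hbdd : BddAbove (Set.range fun n => (u n : ℝ)) :=
    ⟨1, by rintro x ⟨n, rfl⟩; exact (u n).2.2⟩
  set c : ℝ := ⨆ n, (u n : ℝ) with hc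
  have hconv : Tendsto (fun n => (u n : ℝ)) atTop (𝓝 c) :=
    tendsto_atTop_ciSup (fun a b hab => by exact_mod_cast humono hab) hbdd
  have hcI : c ∈ I := by
    constructor
    · exact le_trans (u 0).2.1 (le_ciSup hbdd 0)
    · exact ciSup_le fun n => (u n).2.2
  set L : I := ⟨c, hcI⟩ with hL
  have huL : Tendsto u atTop (𝓝 L) := by
    rw [tendsto_subtype_rng]; exact hconv
  have hle : ∀ n, u n ≤ L := fun n => le_ciSup hbdd n
  have hfixL : φ L = L := by
    have h1 : Tendsto (fun n => φ (u n)) atTop (𝓝 (φ L)) := (hφc.tendsto L).comp huL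
    have h2 : Tendsto (fun n => φ (u n)) atTop (𝓝 L) := by
      have h2' : (fun n => φ (u n)) = fun n => u (n+1) := funext fun n => (hustep n).symm
      rw [h2']
      exact huL.comp (tendsto_add_atTop_nat 1)
    exact tendsto_nhds_unique h1 h2
  have hpL : ∀ s ∈ Set.Icc t L, p s = p L := by
    intro s hs
    have hiter : ∀ n, u n ≤ φ^[n] s ∧ φ^[n] s ≤ L := by
      intro n
      induction n with
      | zero => exact ⟨hs.1, hs.2⟩
      | succ k ih =>
        rw [Function.iterate_succ_apply', hustep]
        exact ⟨hφm ih.1, le_trans (hφm ih.2) (le_of_eq hfixL)⟩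
    have hsq : Tendsto (fun n => φ^[n] s) atTop (𝓝 L) := by
      rw [tendsto_subtype_rng]
      refine tendsto_of_tendsto_of_tendsto_of_le_of_le hconv tendsto_const_nhds
        (fun n => by exact_mod_cast (hiter n).1) (fun n => by exact_mod_cast (hiter n).2)
    have h1 : Tendsto (fun n => p (φ^[n] s)) atTop (𝓝 (p L)) := (hp.tendsto L).comp hsq
    have h2 : ∀ n, p (φ^[n] s) = p s := by
      intro n; induction n with
      | zero => rfl
      | succ k ih => rw [Function.iterate_succ_apply', hfix]; exact ih
    have h3 : Tendsto (fun n => p (φ^[n] s)) atTop (𝓝 (p s)) := by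
      simp only [h2]; exact tendsto_const_nhds
    exact tendsto_nhds_unique h3 h1
  refine ⟨t, L, lt_of_lt_of_le ht (hle 1), fun s hs r hr => ?_⟩
  rw [hpL s hs, hpL r hr]

/-- If a regular path `p : I → X` in a Hausdorff space satisfies
`p ∘ φ = p` for a reparametrization `φ`, then `φ = id` or `p` is constant.
In particular, for `x ≠ y` the right action of `Homeo₊(I)` on the set of
regular paths from `x` to `y` is free. -/
theorem regular_path_repar_fixed_eq_id
    {X : Type*} [TopologicalSpace X] [T2Space X] :
    (∀ p : I → X, Continuous p → IsRegularPath p →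
      ∀ φ : I → I, IsRepar φ → p ∘ φ = p →
        φ = id ∨ ∀ s t : I, p s = p t) ∧
    (∀ x y : X, x ≠ y →
      ∀ p : I → X, Continuous p → IsRegularPath p → p 0 = x → p 1 = y →
        ∀ ρ : I → I, IsRepar ρ → StrictMono ρ → p ∘ ρ = p → ρ = id) := by
  have main : ∀ p : I → X, Continuous p → IsRegularPath p →
      ∀ φ : I → I, IsRepar φ → p ∘ φ = p →
        φ = id ∨ ∀ s t : I, p s = p t := by
    intro p hp hreg φ ⟨hφc, hφm, _, _⟩ heq
    rcases hreg with hconst | hreg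
    · exact Or.inr hconst
    refine Or.inl (funext fun t => ?_)
    have hfix : ∀ s, p (φ s) = p s := fun s => congrFun heq s
    by_contra h
    rcases lt_or_gt_of_ne h with hlt | hgt
    · -- φ t < t : use symm conjugation
      set ψ : I → I := fun s => σ (φ (σ s)) with hψ
      have hψc : Continuous ψ := continuous_symm.comp (hφc.comp continuous_symm)
      have hψm : Monotone ψ := fun a b hab =>
        symm_le_symm.mpr (hφm (symm_le_symm.mpr hab))
      have hψfix : ∀ s, (p ∘ σ) (ψ s) = (p ∘ σ) s := by
        intro s; simp [hψ, Function.comp, symm_symm, hfix]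
      have hψt : σ t < ψ (σ t) := by
        simp only [hψ, symm_symm]
        exact symm_lt_symm.mpr hlt
      obtain ⟨a, b, hab, hc⟩ := key_aux (p ∘ σ) (hp.comp continuous_symm) ψ hψc hψm
        hψfix (σ t) hψt
      refine hreg (σ b) (σ a) (symm_lt_symm.mpr hab) ?_
      intro s hs r hr
      have h1 : σ s ∈ Set.Icc a b :=
        ⟨by rw [← symm_symm a]; exact symm_le_symm.mpr hs.2,
         by rw [← symm_symm b]; exact symm_le_symm.mpr hs.1⟩
      have h2 : σ r ∈ Set.Icc a b :=
        ⟨by rw [← symm_symm a]; exact symm_le_symm.mpr hr.2,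
         by rw [← symm_symm b]; exact symm_le_symm.mpr hr.1⟩
      have := hc (σ s) h1 (σ r) h2
      simpa [Function.comp, symm_symm] using this
    · obtain ⟨a, b, hab, hc⟩ := key_aux p hp φ hφc hφm hfix t hgt
      exact hreg a b hab hc
  refine ⟨main, fun x y hxy p hp hreg h0 h1 ρ hρ _ heq => ?_⟩
  rcases main p hp hreg ρ hρ heq with hid | hconst
  · exact hid
  · exact absurd (h0 ▸ h1 ▸ hconst 0 1) hxy
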